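/- Let c : [0,∞) → M be a curve in a complete metric space M such that t ↦ |∇₋E|(c(t)) is right-continuous, bounded on compact subintervals of (0,∞), and satisfies d(c(t), c(t+s)) ≤ s·|∇₋E|(c(t)) for all t, s > 0 (i.e., |∇₋E|(c(t)) = sup_{s>0} d(c(t),c(t+s))/s). Then for any 0 < t < t', d(c(t), c(t')) ≤ ∫_t^{t'} |∇₋E|(c(s)) ds. -/

import Mathlib

open Filter Metric Set Topology

/-- The descending slope `|∇₋E|(x) = max( limsup_{y→x} (E(x)−E(y))/d(x,y), 0 )`. -/
noncomputable def descSlope {M : Type*} [MetricSpace M] (E : M → ℝ) (x : M) : ℝ :=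
  max (Filter.limsup (fun y => (E x - E y) / dist x y) (𝓝[≠] x)) 0

/-- Length estimate for the gradient flow curve: if `s ↦ |∇₋E|(c(s))` is
right-continuous and bounded on compact subintervals of `(0,∞)`, and
`d(c(t), c(t+s)) ≤ s·|∇₋E|(c(t))` for all `t, s > 0`, then
`d(c(t), c(t')) ≤ ∫_t^{t'} |∇₋E|(c(s)) ds`. -/
theorem stmt19 {M : Type*} [MetricSpace M] [CompleteSpace M]
    (E : M → ℝ) (c : ℝ → M)
    (hrc : ∀ t : ℝ, 0 < t →
      ContinuousWithinAt (fun u => descSlope E (c u)) (Set.Ici t) t)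
    (hbdd : ∀ a b : ℝ, 0 < a → a ≤ b →
      BddAbove ((fun u => descSlope E (c u)) '' Set.Icc a b))
    (hsup : ∀ t s : ℝ, 0 < t → 0 < s →
      dist (c t) (c (t + s)) ≤ s * descSlope E (c t)) :
    ∀ t t' : ℝ, 0 < t → t < t' →
      dist (c t) (c t') ≤ ∫ s in t..t', descSlope E (c s) := by
  intro t t' ht htt'
  set f : ℝ → ℝ := fun u => descSlope E (c u) with hfdef
  have hf0 : ∀ u, 0 ≤ f u := fun u => le_max_right _ _
  obtain ⟨B, hB⟩ := hbdd t t' ht htt'.le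
  have hBmem : ∀ u ∈ Icc t t', f u ≤ B := fun u hu => hB ⟨u, hu, rfl⟩
  have hB0 : 0 ≤ B := le_trans (hf0 t) (hBmem t ⟨le_refl t, htt'.le⟩)
  -- auxiliary extension of f which is right-continuous everywhere
  set F : ℝ → ℝ := fun u => f (max u t) with hFdef
  have hFeq : ∀ u, t ≤ u → F u = f u := fun u hu => by simp [hFdef, max_eq_left hu]
  have hFrc : ∀ u : ℝ, ContinuousWithinAt F (Ici u) u := by
    intro u
    rcases lt_or_ge u t with h | h
    · apply (continuousWithinAt_const (b := f t)).congr_of_eventuallyEq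
      · filter_upwards [(isOpen_Iio.eventually_mem h).filter_mono nhdsWithin_le_nhds]
          with v hv
        simp [hFdef, max_eq_right (mem_Iio.mp hv).le]
      · simp [hFdef, max_eq_right h.le]
    · exact (hrc u (ht.trans_le h)).congr
        (fun v hv => hFeq v (h.trans hv)) (hFeq u h)
  -- F is measurable (limit of dyadic step approximations, using right continuity)
  have hFmeas : Measurable F := by
    apply measurable_of_tendsto_metrizable
      (f := fun n : ℕ => fun u : ℝ => F ((⌈u * 2 ^ n⌉ : ℤ) / 2 ^ n))
    · intro n
      exact (measurable_of_countable (fun k : ℤ => F ((k : ℝ) / 2 ^ n))).comp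
        (Int.measurable_ceil.comp (measurable_id.mul measurable_const))
    · rw [tendsto_pi_nhds]
      intro u
      have h2 : ∀ n : ℕ, (0:ℝ) < 2 ^ n := fun n => by positivity
      have hle : ∀ n : ℕ, u ≤ (⌈u * 2 ^ n⌉ : ℤ) / 2 ^ n := by
        intro n
        rw [le_div_iff₀ (h2 n)]
        exact Int.le_ceil _
      have hge : ∀ n : ℕ, ((⌈u * 2 ^ n⌉ : ℤ) : ℝ) / 2 ^ n ≤ u + (2 ^ n)⁻¹ := by
        intro n
        rw [div_le_iff₀ (h2 n)]
        have := (Int.ceil_lt_add_one (u * 2 ^ n)).le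
        calc ((⌈u * 2 ^ n⌉ : ℤ) : ℝ) ≤ u * 2 ^ n + 1 := this
          _ = (u + (2 ^ n)⁻¹) * 2 ^ n := by field_simp
      have htend : Tendsto (fun n : ℕ => ((⌈u * 2 ^ n⌉ : ℤ) : ℝ) / 2 ^ n) atTop (𝓝 u) := by
        apply tendsto_of_tendsto_of_tendsto_of_le_of_le (g := fun _ => u)
          (h := fun n : ℕ => u + (2 ^ n)⁻¹) tendsto_const_nhds ?_ hle hge
        have : Tendsto (fun n : ℕ => ((2:ℝ) ^ n)⁻¹) atTop (𝓝 0) := by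
          simp only [← inv_pow]
          exact tendsto_pow_atTop_nhds_zero_of_lt_one (by norm_num) (by norm_num)
        simpa using tendsto_const_nhds.add this
      have htend' : Tendsto (fun n : ℕ => ((⌈u * 2 ^ n⌉ : ℤ) : ℝ) / 2 ^ n) atTop
          (𝓝[Ici u] u) :=
        tendsto_nhdsWithin_of_tendsto_nhds_of_eventually_within _ htend
          (Eventually.of_forall hle)
      exact (hFrc u).tendsto.comp htend'
  -- integrability
  have hInt : MeasureTheory.IntegrableOn f (Icc t t') := by
    have hF : MeasureTheory.IntegrableOn F (Icc t t') := by
      apply MeasureTheory.Measure.integrableOn_of_bounded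
        (measure_Icc_lt_top).ne hFmeas.aestronglyMeasurable (M := B)
      refine (MeasureTheory.ae_restrict_iff' measurableSet_Icc).2 (Eventually.of_forall ?_)
      intro u hu
      rw [hFeq u hu.1, Real.norm_eq_abs, abs_of_nonneg (hf0 u)]
      exact hBmem u hu
    exact hF.congr_fun (fun u hu => hFeq u hu.1) measurableSet_Icc
  have hIntI : ∀ a b : ℝ, t ≤ a → a ≤ b → b ≤ t' → IntervalIntegrable f MeasureTheory.volume a b := by
    intro a b hta hab hbt'
    rw [intervalIntegrable_iff_integrableOn_Ioc_of_le hab]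
    exact hInt.mono_set ((Ioc_subset_Icc_self).trans (Icc_subset_Icc hta hbt'))
  -- continuity of the primitive
  have hprim : ContinuousOn (fun x => ∫ s in t..x, f s) (Icc t t') := by
    have := intervalIntegral.continuousOn_primitive_interval
      (f := f) (a := t) (b := t') (μ := MeasureTheory.volume) (by rwa [uIcc_of_le htt'.le])
    rwa [uIcc_of_le htt'.le] at this
  -- Lipschitz estimate for c on [t, t']
  have hlip : ∀ u v : ℝ, t ≤ u → u ≤ v → v ≤ t' → dist (c u) (c v) ≤ B * (v - u) := by
    intro u v htu huv hvt'
    rcases eq_or_lt_of_le huv with rfl | huv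
    · simp
    · have h1 := hsup u (v - u) (ht.trans_le htu) (sub_pos.2 huv)
      rw [add_sub_cancel] at h1
      calc dist (c u) (c v) ≤ (v - u) * f u := h1
        _ ≤ (v - u) * B := by
            apply mul_le_mul_of_nonneg_left (hBmem u ⟨htu, huv.le.trans hvt'⟩)
              (sub_nonneg.2 huv.le)
        _ = B * (v - u) := mul_comm _ _
  have hccont : ContinuousOn c (Icc t t') := by
    have : LipschitzOnWith ⟨B, hB0⟩ c (Icc t t') := by
      refine lipschitzOnWith_iff_dist_le_mul.2 ?_
      intro x hx y hy
      rcases le_total x y with h | h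
      · calc dist (c x) (c y) ≤ B * (y - x) := hlip x y hx.1 h hy.2
          _ = B * dist x y := by rw [Real.dist_eq, abs_of_nonpos (by linarith)]; ring_nf
      · rw [dist_comm (c x), dist_comm x]
        calc dist (c y) (c x) ≤ B * (x - y) := hlip y x hy.1 h hx.2
          _ = B * dist y x := by rw [Real.dist_eq, abs_of_nonpos (by linarith)]; ring_nf
    exact this.continuousOn
  have hφcont : ContinuousOn (fun u => dist (c t) (c u)) (Icc t t') :=
    (continuous_const.dist continuous_id).comp_continuousOn hccont
  -- main step: continuous induction
  have key : ∀ ε : ℝ, 0 < ε → dist (c t) (c t') ≤ (∫ s in t..t', f s) + ε * (t' - t) := by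
    intro ε hε
    set S : Set ℝ := {u | u ∈ Icc t t' ∧
      dist (c t) (c u) ≤ (∫ s in t..u, f s) + ε * (u - t)} with hSdef
    have htS : t ∈ S := ⟨⟨le_refl t, htt'.le⟩, by simp⟩
    have hSb : BddAbove S := ⟨t', fun u hu => hu.1.2⟩
    have hSc : IsClosed S := by
      have hg : ContinuousOn
          (fun u => dist (c t) (c u) - ((∫ s in t..u, f s) + ε * (u - t))) (Icc t t') :=
        hφcont.sub (hprim.add (Continuous.continuousOn (by continuity)))
      have : S = Icc t t' ∩
          (fun u => dist (c t) (c u) - ((∫ s in t..u, f s) + ε * (u - t))) ⁻¹' (Iic 0) := by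
        ext u
        simp only [hSdef, mem_setOf_eq, mem_inter_iff, mem_preimage, mem_Iic]
        constructor
        · rintro ⟨h1, h2⟩; exact ⟨h1, by linarith⟩
        · rintro ⟨h1, h2⟩; exact ⟨h1, by linarith⟩
      rw [this]
      exact hg.preimage_isClosed_of_isClosed isClosed_Icc isClosed_Iic
    have hu₀mem : sSup S ∈ S := hSc.csSup_mem ⟨t, htS⟩ hSb
    set u₀ := sSup S with hu₀def
    obtain ⟨⟨htu₀, hu₀t'⟩, hu₀est⟩ := hu₀mem
    rcases eq_or_lt_of_le hu₀t' with heq | hlt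
    · rw [heq] at hu₀est; exact hu₀est
    · exfalso
      have hu₀pos : 0 < u₀ := ht.trans_le htu₀
      obtain ⟨δ, hδ, hδclose⟩ := Metric.continuousWithinAt_iff.1 (hrc u₀ hu₀pos) ε hε
      set v := min (u₀ + δ / 2) t' with hvdef
      have hu₀v : u₀ < v := lt_min (by linarith) hlt
      have hvt' : v ≤ t' := min_le_right _ _
      have hvδ : v - u₀ < δ := by
        have : v ≤ u₀ + δ / 2 := min_le_left _ _
        linarith
      have hfv : ∀ s ∈ Icc u₀ v, f u₀ - ε ≤ f s := by
        intro s hs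
        have h1 : s ∈ Ici u₀ := hs.1
        have h2 : dist s u₀ < δ := by
          rw [Real.dist_eq, abs_of_nonneg (by linarith [hs.1])]
          linarith [hs.2]
        have := hδclose h1 h2
        rw [Real.dist_eq] at this
        have := abs_lt.1 this
        linarith [this.1]
      have hint1 : IntervalIntegrable f MeasureTheory.volume t u₀ :=
        hIntI t u₀ le_rfl htu₀ hu₀t'
      have hint2 : IntervalIntegrable f MeasureTheory.volume u₀ v :=
        hIntI u₀ v htu₀ hu₀v.le hvt'
      have hmono : (v - u₀) * (f u₀ - ε) ≤ ∫ s in u₀..v, f s := by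
        have h1 : ∫ _ in u₀..v, (f u₀ - ε) ≤ ∫ s in u₀..v, f s :=
          intervalIntegral.integral_mono_on hu₀v.le intervalIntegrable_const hint2 hfv
        rwa [intervalIntegral.integral_const, smul_eq_mul] at h1
      have hdist : dist (c u₀) (c v) ≤ (v - u₀) * f u₀ := by
        have h1 := hsup u₀ (v - u₀) hu₀pos (sub_pos.2 hu₀v)
        rwa [add_sub_cancel] at h1
      have hadd : (∫ s in t..u₀, f s) + (∫ s in u₀..v, f s) = ∫ s in t..v, f s :=
        intervalIntegral.integral_add_adjacent_intervals hint1 hint2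
      have hvS : v ∈ S := by
        refine ⟨⟨htu₀.trans hu₀v.le, hvt'⟩, ?_⟩
        calc dist (c t) (c v) ≤ dist (c t) (c u₀) + dist (c u₀) (c v) := dist_triangle _ _ _
          _ ≤ ((∫ s in t..u₀, f s) + ε * (u₀ - t)) + (v - u₀) * f u₀ := by
              linarith
          _ ≤ ((∫ s in t..u₀, f s) + ε * (u₀ - t)) +
              ((∫ s in u₀..v, f s) + ε * (v - u₀)) := by nlinarith
          _ = (∫ s in t..v, f s) + ε * (v - t) := by rw [← hadd]; ring
      have := le_csSup hSb hvS
      rw [← hu₀def] at this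
      linarith
  -- conclude
  apply le_of_forall_pos_le_add
  intro ε hε
  have hpos : 0 < t' - t := by linarith
  have := key (ε / (t' - t)) (div_pos hε hpos)
  rwa [div_mul_cancel₀ _ hpos.ne'] at this
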